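/- (Theorem 3 with accelerated iteration count: O(1/T) rate.) Under the hypotheses of Theorem 3 (per-stage form), suppose additionally that stage s uses T_s = τ^{s−1}·T_1 iterations with T_1 > 0, and let T = Σ_{s=1}^S T_s. Set q = T_1/(T_1 + (τ − 1)·T), so that q = τ^{−S}. Then P(x̃_S) − P(x*) ≤ q²·(P(x̃_0) − P(x*) + (λ_1/2)‖x̃_0‖₂² + γ_1·D_u) + (γ_1·D_u + (λ_1/2)·R²)·(τ²/(τ − 1))·q. In particular, the first term is O(1/T²) and the second is O((γ_1·D_u + λ_1·R²/2)/T). -/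

import Mathlib

open Finset

/-- **Theorem 3 with accelerated iteration count: `O(1/T)` rate.** Under the hypotheses
of Theorem 3 (per-stage form), suppose stage `s` uses `T_s = τ^{s−1} T_1` iterations
with `T_1 > 0`, and let `T = Σ_{s=1}^S T_s`.  Set `q = T_1/(T_1 + (τ − 1) T)`, so that
`q = τ^{−S}`.  Then
`P(x̃_S) − P(x*) ≤ q² (P(x̃_0) − P(x*) + (λ_1/2)‖x̃_0‖₂² + γ_1 D_u)
+ (γ_1 D_u + (λ_1/2)R²)(τ²/(τ−1)) q`,
i.e. the first term is `O(1/T²)` and the second `O((γ_1 D_u + λ_1 R²/2)/T)`. -/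
theorem cns_general_convex_accelerated_rate {d : ℕ}
    (τ γ1 lam1 Du R : ℝ) (hτ : 1 < τ) (hγ1 : 0 < γ1) (hlam1 : 0 < lam1)
    (hDu : 0 ≤ Du) (hR : 0 ≤ R) (S : ℕ) (hS : 1 ≤ S)
    (P : EuclideanSpace ℝ (Fin d) → ℝ) (xstar : EuclideanSpace ℝ (Fin d))
    (hxstar : ∀ y, P xstar ≤ P y) (hxstarR : ‖xstar‖ ≤ R)
    (Pt : ℕ → EuclideanSpace ℝ (Fin d) → ℝ)
    (hsand : ∀ s, 1 ≤ s → s ≤ S → ∀ x,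
      Pt s x ≤ P x ∧ P x ≤ Pt s x + γ1 / τ ^ (s - 1) * Du)
    (hmono : ∀ s, 1 ≤ s → s < S → ∀ x, Pt s x ≤ Pt (s + 1) x)
    (H : ℕ → EuclideanSpace ℝ (Fin d) → ℝ)
    (hH : ∀ s, 1 ≤ s → s ≤ S → ∀ x,
      H s x = Pt s x + lam1 / τ ^ (s - 1) / 2 * ‖x‖ ^ 2)
    (xs : ℕ → EuclideanSpace ℝ (Fin d))
    (hxs : ∀ s, 1 ≤ s → s ≤ S → ∀ y, H s (xs s) ≤ H s y)
    (hxsR : ∀ s, 1 ≤ s → s ≤ S → ‖xs s‖ ≤ R)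
    (xt : ℕ → EuclideanSpace ℝ (Fin d)) (ρ : ℕ → ℝ)
    (hρ : ∀ s, 1 ≤ s → s ≤ S → ρ s ∈ Set.Ioc 0 (1 / τ ^ 2))
    (hred : ∀ s, 1 ≤ s → s ≤ S →
      H s (xt s) - H s (xs s) ≤ ρ s * (H s (xt (s - 1)) - H s (xs s)))
    (T1 : ℝ) (hT1 : 0 < T1) (Ts : ℕ → ℝ)
    (hTs : ∀ s, 1 ≤ s → s ≤ S → Ts s = τ ^ (s - 1) * T1)
    (T q : ℝ) (hT : T = ∑ s ∈ Finset.Icc 1 S, Ts s)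
    (hq : q = T1 / (T1 + (τ - 1) * T)) :
    q = (τ ^ S)⁻¹ ∧
    P (xt S) - P xstar ≤
      q ^ 2 * (P (xt 0) - P xstar + lam1 / 2 * ‖xt 0‖ ^ 2 + γ1 * Du) +
        (γ1 * Du + lam1 / 2 * R ^ 2) * (τ ^ 2 / (τ - 1)) * q := by
  have hτ0 : (0:ℝ) < τ := lt_trans one_pos hτ
  have hτ1 : (0:ℝ) < τ - 1 := by linarith
  have hp : ∀ n : ℕ, (0:ℝ) < τ ^ n := fun n => pow_pos hτ0 n
  set A := P (xt 0) - P xstar + lam1 / 2 * ‖xt 0‖ ^ 2 + γ1 * Du with hA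
  set e := γ1 * Du + lam1 / 2 * R ^ 2 with hedef
  have he : (0:ℝ) ≤ e := by rw [hedef]; positivity
  -- Part 1 : q = τ^{-S}
  have hsum : T = T1 * ((τ ^ S - 1) / (τ - 1)) := by
    rw [hT, Finset.sum_congr rfl
      (fun s hs => hTs s (mem_Icc.mp hs).1 (mem_Icc.mp hs).2),
      ← Finset.Ico_add_one_right_eq_Icc, Finset.sum_Ico_eq_sum_range]
    simp only [Nat.succ_sub_one, Nat.add_sub_cancel, Nat.add_sub_cancel_left]
    rw [← Finset.sum_mul, geom_sum_eq hτ.ne']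
    ring
  have hden : T1 + (τ - 1) * T = T1 * τ ^ S := by
    rw [hsum]; field_simp; ring
  have hq' : q = (τ ^ S)⁻¹ := by
    rw [hq, hden, eq_comm, inv_eq_iff_eq_inv, eq_comm, inv_div]
    rw [mul_comm, mul_div_assoc, div_self hT1.ne', mul_one]
  refine ⟨hq', ?_⟩
  -- nonnegativity of stage gaps starting from previous iterate
  have hgap : ∀ s, 1 ≤ s → s ≤ S → 0 ≤ H s (xt (s-1)) - H s (xs s) := by
    intro s h1 h2
    have := hxs s h1 h2 (xt (s - 1))
    linarith
  -- base : Δ 1 ≤ A / τ^2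
  have base : H 1 (xt 1) - H 1 (xs 1) ≤ A / τ ^ 2 := by
    have hr := hred 1 le_rfl hS
    have hρ1 := hρ 1 le_rfl hS
    have hg := hgap 1 le_rfl hS
    have hgA : H 1 (xt 0) - H 1 (xs 1) ≤ A := by
      have e1 := hH 1 le_rfl hS (xt 0)
      have e2 := hH 1 le_rfl hS (xs 1)
      have s1 := (hsand 1 le_rfl hS (xt 0)).1
      have s2 := (hsand 1 le_rfl hS (xs 1)).2
      have s3 := hxstar (xs 1)
      have hn : (0:ℝ) ≤ lam1 / 1 / 2 * ‖xs 1‖ ^ 2 := by positivity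
      simp only [Nat.sub_self, pow_zero] at e1 e2 s1 s2
      rw [hA, e1, e2]
      have hd : lam1 / 1 / 2 = lam1 / 2 := by norm_num
      rw [hd] at hn ⊢
      linarith
    calc H 1 (xt 1) - H 1 (xs 1) ≤ ρ 1 * (H 1 (xt 0) - H 1 (xs 1)) := by
          simpa using hr
      _ ≤ (1 / τ ^ 2) * (H 1 (xt 0) - H 1 (xs 1)) :=
          mul_le_mul_of_nonneg_right hρ1.2 hg
      _ ≤ (1 / τ ^ 2) * A := by
          apply mul_le_mul_of_nonneg_left hgA
          positivity
      _ = A / τ ^ 2 := by ring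
  -- inductive bound
  have main : ∀ s, 1 ≤ s → s ≤ S →
      H s (xt s) - H s (xs s) ≤ A / τ ^ (2*s) + e * τ / ((τ - 1) * τ ^ s) := by
    intro s hs1
    induction s, hs1 using Nat.le_induction with
    | base =>
      intro _
      have h0 : (0:ℝ) ≤ e * τ / ((τ - 1) * τ ^ 1) := by positivity
      have h2 : A / τ ^ (2*1) = A / τ ^ 2 := by norm_num
      rw [h2]
      linarith [base]
    | succ s hs ih =>
      intro hsS
      have hsS' : s ≤ S := le_of_lt (Nat.lt_of_succ_le hsS)
      have hslt : s < S := Nat.lt_of_succ_le hsS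
      have ihv := ih hsS'
      have hr := hred (s+1) (Nat.le_add_left 1 s) hsS
      have hρs := hρ (s+1) (Nat.le_add_left 1 s) hsS
      have hg := hgap (s+1) (Nat.le_add_left 1 s) hsS
      simp only [Nat.add_sub_cancel] at hr hg
      have hgap2 : H (s+1) (xt s) - H (s+1) (xs (s+1)) ≤
          (H s (xt s) - H s (xs s)) + e / τ ^ (s-1) := by
        have e1 := hH (s+1) (Nat.le_add_left 1 s) hsS (xt s)
        have e2 := hH (s+1) (Nat.le_add_left 1 s) hsS (xs (s+1))
        have e3 := hH s hs hsS' (xt s)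
        have e4 := hH s hs hsS' (xs (s+1))
        have e5 := hH s hs hsS' (xs s)
        simp only [Nat.add_sub_cancel] at e1 e2
        have s1 := (hsand (s+1) (Nat.le_add_left 1 s) hsS (xt s)).1
        have s2 := (hsand s hs hsS' (xt s)).2
        have s3 := hmono s hs hslt (xs (s+1))
        have s4 := hxs s hs hsS' (xs (s+1))
        rw [e4, e5] at s4
        have hlam : lam1 / τ ^ s ≤ lam1 / τ ^ (s-1) := by
          apply div_le_div_of_nonneg_left hlam1.le (hp _)
          exact pow_le_pow_right₀ hτ.le (Nat.sub_le s 1)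
        have hn1 : (0:ℝ) ≤ ‖xt s‖ ^ 2 := by positivity
        have hn2 : ‖xs (s+1)‖ ^ 2 ≤ R ^ 2 :=
          pow_le_pow_left₀ (norm_nonneg _) (hxsR (s+1) (Nat.le_add_left 1 s) hsS) 2
        have prod1 : (lam1 / τ ^ (s-1) - lam1 / τ ^ s) * ‖xs (s+1)‖ ^ 2 ≤
            (lam1 / τ ^ (s-1) - lam1 / τ ^ s) * R ^ 2 :=
          mul_le_mul_of_nonneg_left hn2 (by linarith)
        have prod2 : lam1 / τ ^ s * ‖xt s‖ ^ 2 ≤ lam1 / τ ^ (s-1) * ‖xt s‖ ^ 2 :=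
          mul_le_mul_of_nonneg_right hlam hn1
        have hLR : (0:ℝ) ≤ lam1 / τ ^ s * R ^ 2 := by positivity
        have hscale : e / τ ^ (s-1) =
            γ1 / τ ^ (s-1) * Du + lam1 / τ ^ (s-1) / 2 * R ^ 2 := by
          rw [hedef]; ring
        rw [e1, e2, e3, e5, hscale]
        linarith [s1, s2, s3, s4, prod1, prod2, hLR]
      have step : H (s+1) (xt (s+1)) - H (s+1) (xs (s+1)) ≤
          ((H s (xt s) - H s (xs s)) + e / τ ^ (s-1)) / τ ^ 2 := by
        calc H (s+1) (xt (s+1)) - H (s+1) (xs (s+1))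
            ≤ ρ (s+1) * (H (s+1) (xt s) - H (s+1) (xs (s+1))) := hr
          _ ≤ (1 / τ ^ 2) * (H (s+1) (xt s) - H (s+1) (xs (s+1))) :=
              mul_le_mul_of_nonneg_right hρs.2 hg
          _ ≤ (1 / τ ^ 2) * ((H s (xt s) - H s (xs s)) + e / τ ^ (s-1)) := by
              apply mul_le_mul_of_nonneg_left hgap2
              positivity
          _ = ((H s (xt s) - H s (xs s)) + e / τ ^ (s-1)) / τ ^ 2 := by ring
      have hτs1 : τ ^ (s-1) * τ ^ 2 = τ ^ (s+1) := by
        rw [← pow_add]; congr 1; omega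
      have key : (A / τ ^ (2*s) + e * τ / ((τ - 1) * τ ^ s) + e / τ ^ (s-1)) / τ ^ 2
          = A / τ ^ (2*(s+1)) + e * τ / ((τ - 1) * τ ^ (s+1)) := by
        have h1 : τ ^ (2*(s+1)) = τ ^ (2*s) * τ ^ 2 := by
          rw [show 2*(s+1) = 2*s+2 by omega, pow_add]
        have h2 : τ ^ (s+1) = τ ^ s * τ := pow_succ τ s
        have h3 : τ ^ s = τ ^ (s-1) * τ := by
          rw [← pow_succ]; congr 1; omega
        rw [h1, h2, h3]
        field_simp
        ring
      calc H (s+1) (xt (s+1)) - H (s+1) (xs (s+1))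
          ≤ ((H s (xt s) - H s (xs s)) + e / τ ^ (s-1)) / τ ^ 2 := step
        _ ≤ (A / τ ^ (2*s) + e * τ / ((τ - 1) * τ ^ s) + e / τ ^ (s-1)) / τ ^ 2 := by
            rw [div_le_div_iff_of_pos_right (hp 2)]
            linarith
        _ = A / τ ^ (2*(s+1)) + e * τ / ((τ - 1) * τ ^ (s+1)) := key
  -- final inequality
  have final : P (xt S) - P xstar ≤
      (H S (xt S) - H S (xs S)) + e / τ ^ (S-1) := by
    have e1 := hH S hS le_rfl (xt S)
    have e2 := hH S hS le_rfl xstar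
    have e3 := hH S hS le_rfl (xs S)
    have s1 := (hsand S hS le_rfl (xt S)).2
    have s2 := (hsand S hS le_rfl xstar).1
    have s4 := hxs S hS le_rfl xstar
    rw [e2, e3] at s4
    have hn1 : (0:ℝ) ≤ lam1 / τ ^ (S-1) / 2 * ‖xt S‖ ^ 2 := by positivity
    have hn2 : ‖xstar‖ ^ 2 ≤ R ^ 2 := pow_le_pow_left₀ (norm_nonneg _) hxstarR 2
    have prod3 : lam1 / τ ^ (S-1) * ‖xstar‖ ^ 2 ≤ lam1 / τ ^ (S-1) * R ^ 2 :=
      mul_le_mul_of_nonneg_left hn2 (by positivity)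
    have hscale : e / τ ^ (S-1) =
        γ1 / τ ^ (S-1) * Du + lam1 / τ ^ (S-1) / 2 * R ^ 2 := by
      rw [hedef]; ring
    rw [e1, e3, hscale]
    linarith [s1, s2, s4, prod3, hn1]
  have mainS := main S hS le_rfl
  have hq2 : q ^ 2 = (τ ^ (2*S))⁻¹ := by
    rw [hq', inv_pow, ← pow_mul, Nat.mul_comm]
  have hfin : A / τ ^ (2*S) + e * τ / ((τ - 1) * τ ^ S) + e / τ ^ (S-1)
      = q ^ 2 * A + e * (τ ^ 2 / (τ - 1)) * q := by
    rw [hq2, hq']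
    have hS1 : τ ^ S = τ ^ (S-1) * τ := by
      rw [← pow_succ]; congr 1; omega
    rw [hS1]
    field_simp
    ring
  calc P (xt S) - P xstar
      ≤ (H S (xt S) - H S (xs S)) + e / τ ^ (S-1) := final
    _ ≤ A / τ ^ (2*S) + e * τ / ((τ - 1) * τ ^ S) + e / τ ^ (S-1) := by linarith
    _ = q ^ 2 * A + e * (τ ^ 2 / (τ - 1)) * q := hfin
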